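/- Let f : {±1}^n → [−1,1]. Sample p uniformly from [−1,1] and x ∈ {±1}^n with independent coordinates each of expectation p. Then E[f(x) · Σ_{i=1}^n (x_i − p) + 2|f(x) − x̄|] ≥ 1/3, where x̄ = (1/n)Σ_i x_i. -/

import Mathlib

open Finset

noncomputable def eps (b : Bool) : ℝ := if b then 1 else -1

lemma eps_sq (b : Bool) : eps b * eps b = 1 := by cases b <;> simp [eps]

lemma hasDeriv_mu (n : ℕ) (x : Fin n → Bool) (p : ℝ) :
    HasDerivAt (fun p : ℝ => (1 - p ^ 2) * ∏ i, (1 + eps (x i) * p) / 2)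
      ((∏ i, (1 + eps (x i) * p) / 2) * (∑ i, (eps (x i) - p))
        - 2 * p * ∏ i, (1 + eps (x i) * p) / 2) p := by
  have hfac : ∀ i : Fin n, HasDerivAt (fun p : ℝ => (1 + eps (x i) * p) / 2) (eps (x i) / 2) p := by
    intro i
    simpa using (((hasDerivAt_id p).const_mul (eps (x i))).const_add 1).div_const 2
  have hprod := HasDerivAt.finset_prod (u := Finset.univ)
      (f := fun (i : Fin n) (p : ℝ) => (1 + eps (x i) * p) / 2)
      (f' := fun i => eps (x i) / 2) (fun i _ => hfac i)
  have hq : HasDerivAt (fun p : ℝ => 1 - p ^ 2) (-(2 * p)) p := by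
    simpa using ((hasDerivAt_pow 2 p).const_sub 1)
  have hmul := hq.mul hprod
  have key : (1 - p ^ 2) * ∑ i, (∏ j ∈ Finset.univ.erase i, (1 + eps (x j) * p) / 2) • (eps (x i) / 2)
      = (∏ i, (1 + eps (x i) * p) / 2) * (∑ i, (eps (x i) - p)) := by
    rw [Finset.mul_sum, Finset.mul_sum]
    refine Finset.sum_congr rfl (fun i _ => ?_)
    have h2 : eps (x i) * eps (x i) = 1 := eps_sq _
    rw [smul_eq_mul,
      ← Finset.mul_prod_erase Finset.univ (fun j => (1 + eps (x j) * p) / 2) (Finset.mem_univ i)]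
    linear_combination (-(∏ j ∈ Finset.univ.erase i, (1 + eps (x j) * p) / 2) * p / 2) * h2
  have e : (fun p : ℝ => (1 - p ^ 2) * ∏ i, (1 + eps (x i) * p) / 2)
      = (fun p => 1 - p ^ 2) * ∏ i, fun p : ℝ => (1 + eps (x i) * p) / 2 := by
    ext q; simp [Finset.prod_apply]
  rw [e]
  refine hmul.congr_deriv ?_
  rw [key, Finset.prod_apply]
  ring

lemma cont_mu (n : ℕ) (x : Fin n → Bool) :
    Continuous (fun p : ℝ => ∏ i, (1 + eps (x i) * p) / 2) :=
  continuous_finset_prod _ (fun i _ => by fun_prop)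


lemma integral_key (n : ℕ) (x : Fin n → Bool) :
    (∫ p in (-1:ℝ)..1, (∏ i, (1 + eps (x i) * p) / 2) * (∑ i, (eps (x i) - p)))
      = ∫ p in (-1:ℝ)..1, 2 * p * ∏ i, (1 + eps (x i) * p) / 2 := by
  have hc1 : Continuous fun p : ℝ => (∏ i, (1 + eps (x i) * p) / 2) * (∑ i, (eps (x i) - p)) :=
    (cont_mu n x).mul (by fun_prop)
  have hc2 : Continuous fun p : ℝ => 2 * p * ∏ i, (1 + eps (x i) * p) / 2 :=
    (by fun_prop : Continuous fun p : ℝ => 2 * p).mul (cont_mu n x)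
  have h1 : IntervalIntegrable (fun p : ℝ => (∏ i, (1 + eps (x i) * p) / 2) * (∑ i, (eps (x i) - p))) MeasureTheory.volume (-1) 1 := hc1.intervalIntegrable _ _
  have h2 : IntervalIntegrable (fun p : ℝ => 2 * p * ∏ i, (1 + eps (x i) * p) / 2) MeasureTheory.volume (-1) 1 := hc2.intervalIntegrable _ _
  have hFTC := intervalIntegral.integral_eq_sub_of_hasDerivAt
    (a := (-1:ℝ)) (b := 1)
    (f := fun p : ℝ => (1 - p ^ 2) * ∏ i, (1 + eps (x i) * p) / 2)
    (fun p _ => hasDeriv_mu n x p) ((hc1.sub hc2).intervalIntegrable _ _)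
  rw [intervalIntegral.integral_sub h1 h2] at hFTC
  simp only [one_pow, neg_one_sq, sub_self, zero_mul, sub_zero] at hFTC
  linarith

lemma sum_prod_bool (n : ℕ) (g : Fin n → Bool → ℝ) :
    ∑ x : Fin n → Bool, ∏ i, g i (x i) = ∏ i, (g i true + g i false) := by
  have := Finset.sum_prod_piFinset (Finset.univ : Finset Bool) g
  rw [Fintype.piFinset_univ] at this
  simpa [Fintype.sum_bool] using this

lemma sum_mu_eps (n : ℕ) (p : ℝ) (i0 : Fin n) :
    ∑ x : Fin n → Bool, (∏ i, (1 + eps (x i) * p) / 2) * eps (x i0) = p := by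
  have h : ∀ x : Fin n → Bool, (∏ i, (1 + eps (x i) * p) / 2) * eps (x i0)
      = ∏ i, ((1 + eps (x i) * p) / 2 * (if i = i0 then eps (x i) else 1)) := by
    intro x
    rw [Finset.prod_mul_distrib, Fintype.prod_ite_eq' i0 (fun i => eps (x i))]
  simp_rw [h]
  rw [sum_prod_bool n (fun i b => (1 + eps b * p) / 2 * if i = i0 then eps b else 1)]
  have h2 : ∀ i : Fin n, ((1 + eps true * p) / 2 * (if i = i0 then eps true else 1)
      + (1 + eps false * p) / 2 * (if i = i0 then eps false else 1)) = if i = i0 then p else 1 := by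
    intro i; by_cases hi : i = i0 <;> simp [hi, eps] <;> ring
  simp_rw [h2]
  simp

lemma sum_mu_bar (n : ℕ) (p : ℝ) :
    ∑ x : Fin n → Bool, (∏ i, (1 + eps (x i) * p) / 2) * (∑ i, eps (x i)) = n * p := by
  simp_rw [Finset.mul_sum]
  rw [Finset.sum_comm]
  simp_rw [sum_mu_eps]
  simp [mul_comm]

lemma mu_nonneg (n : ℕ) (x : Fin n → Bool) {p : ℝ} (hp : p ∈ Set.Icc (-1:ℝ) 1) :
    0 ≤ ∏ i, (1 + eps (x i) * p) / 2 := by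
  refine Finset.prod_nonneg (fun i _ => ?_)
  obtain ⟨h1, h2⟩ := hp
  cases x i <;> simp [eps] <;> linarith

/-- Fingerprinting Lemma: For `f : {±1}^n → [-1,1]`,
sampling `p` uniform in `[-1,1]` and `x ~ p^n`,
`E[f(x)·∑_i (x_i - p) + 2|f(x) - x̄|] ≥ 1/3`, where `x̄ = (1/n)∑_i x_i`. -/
theorem stmt4 (n : ℕ) (hn : 0 < n) (f : (Fin n → Bool) → ℝ)
    (hf : ∀ x, |f x| ≤ 1) :
    (1 / 3 : ℝ) ≤ (1 / 2) * ∫ p in (-1 : ℝ)..1,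
      ∑ x : Fin n → Bool,
        (∏ i, (1 + (if x i then (1 : ℝ) else -1) * p) / 2) *
          (f x * (∑ i, ((if x i then (1 : ℝ) else -1) - p)) +
            2 * |f x - (∑ i, (if x i then (1 : ℝ) else -1)) / n|) := by
  have heps : ∀ b : Bool, (if b then (1:ℝ) else -1) = eps b := fun b => rfl
  simp only [heps]
  have hn' : (0:ℝ) < n := by exact_mod_cast hn
  have hcT : ∀ x : Fin n → Bool, Continuous fun p : ℝ =>
      (∏ i, (1 + eps (x i) * p) / 2) * (f x * (∑ i, (eps (x i) - p)) + 2 * |f x - (∑ i, eps (x i)) / (n:ℝ)|) := by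
    intro x
    exact (cont_mu n x).mul ((continuous_const.mul (by fun_prop)).add continuous_const)
  have hcU : ∀ x : Fin n → Bool, Continuous fun p : ℝ =>
      (∏ i, (1 + eps (x i) * p) / 2) * (2 * p * f x + 2 * |f x - (∑ i, eps (x i)) / (n:ℝ)|) := by
    intro x
    exact (cont_mu n x).mul (by fun_prop)
  rw [intervalIntegral.integral_finset_sum (fun x _ => (hcT x).intervalIntegrable _ _)]
  -- per-x evaluation
  have hxval : ∀ x : Fin n → Bool,
      (∫ p in (-1:ℝ)..1, (∏ i, (1 + eps (x i) * p) / 2)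
          * (f x * (∑ i, (eps (x i) - p)) + 2 * |f x - (∑ i, eps (x i)) / (n:ℝ)|))
        = ∫ p in (-1:ℝ)..1, (∏ i, (1 + eps (x i) * p) / 2) * (2 * p * f x + 2 * |f x - (∑ i, eps (x i)) / (n:ℝ)|) := by
    intro x
    have hA : IntervalIntegrable
        (fun p : ℝ => (∏ i, (1 + eps (x i) * p) / 2) * (∑ i, (eps (x i) - p)))
        MeasureTheory.volume (-1) 1 :=
      ((cont_mu n x).mul (by fun_prop)).intervalIntegrable _ _
    have hB : IntervalIntegrable (fun p : ℝ => 2 * p * ∏ i, (1 + eps (x i) * p) / 2)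
        MeasureTheory.volume (-1) 1 :=
      ((by fun_prop : Continuous fun p : ℝ => 2 * p).mul (cont_mu n x)).intervalIntegrable _ _
    have hμ : IntervalIntegrable (fun p : ℝ => ∏ i, (1 + eps (x i) * p) / 2)
        MeasureTheory.volume (-1) 1 := (cont_mu n x).intervalIntegrable _ _
    calc (∫ p in (-1:ℝ)..1, (∏ i, (1 + eps (x i) * p) / 2)
          * (f x * (∑ i, (eps (x i) - p)) + 2 * |f x - (∑ i, eps (x i)) / (n:ℝ)|))
        = (∫ p in (-1:ℝ)..1, (f x * ((∏ i, (1 + eps (x i) * p) / 2) * (∑ i, (eps (x i) - p)))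
            + 2 * |f x - (∑ i, eps (x i)) / (n:ℝ)| * ∏ i, (1 + eps (x i) * p) / 2)) := by
          apply intervalIntegral.integral_congr
          intro p _; ring
      _ = f x * (∫ p in (-1:ℝ)..1, (∏ i, (1 + eps (x i) * p) / 2) * (∑ i, (eps (x i) - p)))
            + 2 * |f x - (∑ i, eps (x i)) / (n:ℝ)| * ∫ p in (-1:ℝ)..1, ∏ i, (1 + eps (x i) * p) / 2 := by
          rw [intervalIntegral.integral_add ((hA.const_mul _)) (hμ.const_mul _),
            intervalIntegral.integral_const_mul, intervalIntegral.integral_const_mul]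
      _ = f x * (∫ p in (-1:ℝ)..1, 2 * p * ∏ i, (1 + eps (x i) * p) / 2)
            + 2 * |f x - (∑ i, eps (x i)) / (n:ℝ)| * ∫ p in (-1:ℝ)..1, ∏ i, (1 + eps (x i) * p) / 2 := by
          rw [integral_key]
      _ = ∫ p in (-1:ℝ)..1, (f x * (2 * p * ∏ i, (1 + eps (x i) * p) / 2)
            + 2 * |f x - (∑ i, eps (x i)) / (n:ℝ)| * ∏ i, (1 + eps (x i) * p) / 2) := by
          rw [intervalIntegral.integral_add ((hB.const_mul _)) (hμ.const_mul _),
            intervalIntegral.integral_const_mul, intervalIntegral.integral_const_mul]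
      _ = ∫ p in (-1:ℝ)..1, (∏ i, (1 + eps (x i) * p) / 2) * (2 * p * f x + 2 * |f x - (∑ i, eps (x i)) / (n:ℝ)|) := by
          apply intervalIntegral.integral_congr
          intro p _; ring
  simp_rw [hxval]
  rw [← intervalIntegral.integral_finset_sum (fun x _ => (hcU x).intervalIntegrable _ _)]
  -- lower bound the integrand pointwise
  have hlow : (∫ p in (-1:ℝ)..1, 2 * p ^ 2)
      ≤ ∫ p in (-1:ℝ)..1, ∑ x : Fin n → Bool,
          (∏ i, (1 + eps (x i) * p) / 2) * (2 * p * f x + 2 * |f x - (∑ i, eps (x i)) / (n:ℝ)|) := by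
    apply intervalIntegral.integral_mono_on (by norm_num)
      ((by fun_prop : Continuous fun p : ℝ => 2 * p ^ 2).intervalIntegrable _ _)
      ((continuous_finset_sum _ (fun x _ => hcU x)).intervalIntegrable _ _)
    intro p hp
    have habs : |p| ≤ 1 := abs_le.mpr ⟨hp.1, hp.2⟩
    have hsum : ∑ x : Fin n → Bool,
        (∏ i, (1 + eps (x i) * p) / 2) * (2 * p * ((∑ i, eps (x i)) / n)) = 2 * p ^ 2 := by
      have h1 : ∑ x : Fin n → Bool,
          (∏ i, (1 + eps (x i) * p) / 2) * (2 * p * ((∑ i, eps (x i)) / n))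
          = (2 * p / n) * ∑ x : Fin n → Bool,
            (∏ i, (1 + eps (x i) * p) / 2) * (∑ i, eps (x i)) := by
        rw [Finset.mul_sum]
        exact Finset.sum_congr rfl (fun x _ => by ring)
      rw [h1, sum_mu_bar]
      field_simp
    rw [← hsum]
    apply Finset.sum_le_sum
    intro x _
    apply mul_le_mul_of_nonneg_left _ (mu_nonneg n x hp)
    have key : 2 * p * ((∑ i, eps (x i)) / n) - 2 * p * f x ≤ 2 * |f x - (∑ i, eps (x i)) / (n:ℝ)| := by
      calc 2 * p * ((∑ i, eps (x i)) / n) - 2 * p * f x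
          = -(2 * p) * (f x - (∑ i, eps (x i)) / n) := by ring
        _ ≤ |(-(2 * p)) * (f x - (∑ i, eps (x i)) / n)| := le_abs_self _
        _ = 2 * |p| * |f x - (∑ i, eps (x i)) / (n:ℝ)| := by rw [abs_mul, abs_neg, abs_mul]; norm_num
        _ ≤ 2 * 1 * |f x - (∑ i, eps (x i)) / (n:ℝ)| := by
            have := abs_nonneg (f x - (∑ i, eps (x i)) / n)
            nlinarith
        _ = 2 * |f x - (∑ i, eps (x i)) / (n:ℝ)| := by ring
    linarith
  have hval : (∫ p in (-1:ℝ)..1, 2 * p ^ 2) = 4 / 3 := by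
    rw [intervalIntegral.integral_const_mul, integral_pow]
    norm_num
  rw [hval] at hlow
  linarith
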